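/- Let f, σ, τ be as in the context, let 0 < α_2 < α_1 < 1/2, set M = f(σ), and let ρ_{3,0} ∈ (σ, 1) satisfy f(ρ_{3,0}) = α_1 M/(1−α_2). For r with α_2 M/(1−α_1) ≤ r < M, set γ̂_3 = ((α_1 − α_2) r + α_2 M)/(1−α_2) and let ρ̂_3 be the unique point of [0, σ] with f(ρ̂_3) = γ̂_3. Then γ̂_3 < f(ρ_{3,0}), ρ̂_3 < τ(ρ_{3,0}) < ρ_{3,0}, and hence |ρ_{3,0} − ρ̂_3| > ρ_{3,0} − τ(ρ_{3,0}) > 0, a positive lower bound independent of r. In particular, as r → M the jump |ρ_{3,0} − ρ̂_3| stays bounded away from zero, while any ρ_1 ∈ [0,σ] with f(ρ_1) = r satisfies σ − ρ_1 → 0. -/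

import Mathlib

open Set

/-- Appendix B: the interaction of an arbitrarily small wave with a junction
can produce a wave of uniformly large strength in the densities. The new flux
`γ̂₃` on the third (outgoing) road stays below `f ρ₃₀`, so the corresponding
density jump `|ρ₃₀ − ρ̂₃|` is bounded below by `ρ₃₀ − τ(ρ₃₀) > 0`,
independently of `r`; while, as `r → M`, the incoming densities `ρ₁` with
`f ρ₁ = r` satisfy `σ − ρ₁ → 0`. -/
theorem stmt15 (f : ℝ → ℝ) (σ : ℝ) (τ : ℝ → ℝ)
    (hf_cont : ContinuousOn f (Icc 0 1))
    (hf_conc : StrictConcaveOn ℝ (Icc 0 1) f)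
    (hf0 : f 0 = 0) (hf1 : f 1 = 0)
    (hσ : σ ∈ Ioo (0 : ℝ) 1)
    (hσmax : ∀ x ∈ Icc (0 : ℝ) 1, f x ≤ f σ)
    (hτσ : τ σ = σ)
    (hτ : ∀ ρ ∈ Icc (0 : ℝ) 1, ρ ≠ σ →
      τ ρ ∈ Icc (0 : ℝ) 1 ∧ τ ρ ≠ ρ ∧ f (τ ρ) = f ρ)
    (α₁ α₂ M : ℝ) (h₂ : 0 < α₂) (h₂₁ : α₂ < α₁) (h₁ : α₁ < 1/2)
    (hM : M = f σ)
    (ρ₃₀ : ℝ) (hρ₃₀ : ρ₃₀ ∈ Ioo σ 1) (hf₃₀ : f ρ₃₀ = α₁ * M / (1 - α₂))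
    (r : ℝ) (hr₁ : α₂ * M / (1 - α₁) ≤ r) (hr₂ : r < M)
    (γh₃ : ℝ) (hγh₃ : γh₃ = ((α₁ - α₂) * r + α₂ * M) / (1 - α₂))
    (ρh₃ : ℝ) (hρh₃mem : ρh₃ ∈ Icc (0 : ℝ) σ) (hρh₃f : f ρh₃ = γh₃) :
    γh₃ < f ρ₃₀ ∧ ρh₃ < τ ρ₃₀ ∧ τ ρ₃₀ < ρ₃₀ ∧
    0 < ρ₃₀ - τ ρ₃₀ ∧ ρ₃₀ - τ ρ₃₀ < |ρ₃₀ - ρh₃| ∧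
    (∀ ε > (0 : ℝ), ∃ δ > (0 : ℝ), ∀ r' ρ₁ : ℝ,
      M - δ < r' → r' < M → ρ₁ ∈ Icc (0 : ℝ) σ → f ρ₁ = r' → σ - ρ₁ < ε) := by
  obtain ⟨hσ0, hσ1⟩ := hσ
  have hσIcc : σ ∈ Icc (0 : ℝ) 1 := ⟨le_of_lt hσ0, le_of_lt hσ1⟩
  -- strict maximality at σ
  have key_lt : ∀ x, x ∈ Icc (0 : ℝ) 1 → x ≠ σ → f x < f σ := by
    intro x hx hne
    rcases (hσmax x hx).lt_or_eq with h | h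
    · exact h
    exfalso
    have hmem : (1/2 : ℝ) • x + (1/2 : ℝ) • σ ∈ Icc (0 : ℝ) 1 :=
      hf_conc.1 hx hσIcc (by norm_num) (by norm_num) (by norm_num)
    have hstr := hf_conc.2 hx hσIcc hne (by norm_num : (0:ℝ) < 1/2)
      (by norm_num : (0:ℝ) < 1/2) (by norm_num)
    have hle := hσmax _ hmem
    simp only [smul_eq_mul] at hstr hle
    linarith
  -- strict monotonicity on [0, σ]
  have mono : ∀ x y : ℝ, 0 ≤ x → x < y → y ≤ σ → f x < f y := by
    intro x y hx hxy hy
    have hxI : x ∈ Icc (0 : ℝ) 1 := ⟨hx, by linarith⟩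
    have hyI : y ∈ Icc (0 : ℝ) 1 := ⟨by linarith, by linarith⟩
    rcases hy.lt_or_eq with hy' | rfl
    · have hfx : f x ≤ f σ := hσmax x hxI
      set t : ℝ := (σ - y) / (σ - x) with ht
      have hσx : 0 < σ - x := by linarith
      have ht0 : 0 < t := div_pos (by linarith) hσx
      have ht1 : t < 1 := (div_lt_one hσx).mpr (by linarith)
      have hne : x ≠ σ := by linarith
      have hstr := hf_conc.2 hxI hσIcc hne ht0 (by linarith : (0:ℝ) < 1 - t)
        (by ring)
      have hcomb : t • x + (1 - t) • σ = y := by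
        simp only [smul_eq_mul]
        rw [ht]; field_simp
        ring
      rw [hcomb] at hstr
      simp only [smul_eq_mul] at hstr
      nlinarith
    · exact key_lt x hxI (by linarith)
  -- strict antitonicity on [σ, 1]
  have anti : ∀ x y : ℝ, σ ≤ x → x < y → y ≤ 1 → f y < f x := by
    intro x y hx hxy hy
    have hxI : x ∈ Icc (0 : ℝ) 1 := ⟨by linarith, by linarith⟩
    have hyI : y ∈ Icc (0 : ℝ) 1 := ⟨by linarith, hy⟩
    rcases hx.lt_or_eq with hx' | rfl
    · have hfy : f y ≤ f σ := hσmax y hyI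
      set t : ℝ := (y - x) / (y - σ) with ht
      have hyσ : 0 < y - σ := by linarith
      have ht0 : 0 < t := div_pos (by linarith) hyσ
      have ht1 : t < 1 := (div_lt_one hyσ).mpr (by linarith)
      have hne : σ ≠ y := by linarith
      have hstr := hf_conc.2 hσIcc hyI hne ht0 (by linarith : (0:ℝ) < 1 - t)
        (by ring)
      have hcomb : t • σ + (1 - t) • y = x := by
        simp only [smul_eq_mul]
        rw [ht]; field_simp
        ring
      rw [hcomb] at hstr
      simp only [smul_eq_mul] at hstr
      nlinarith
    · exact key_lt y hyI (by linarith)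
  obtain ⟨hρ₃₀σ, hρ₃₀1⟩ := hρ₃₀
  have hρ₃₀I : ρ₃₀ ∈ Icc (0 : ℝ) 1 := ⟨by linarith, le_of_lt hρ₃₀1⟩
  obtain ⟨hτI, hτne, hτf⟩ := hτ ρ₃₀ hρ₃₀I (by linarith)
  -- 1. γh₃ < f ρ₃₀
  have h1α₂ : (0 : ℝ) < 1 - α₂ := by linarith
  have hγlt : γh₃ < f ρ₃₀ := by
    rw [hγh₃, hf₃₀, div_lt_div_iff₀ h1α₂ h1α₂]
    nlinarith [mul_lt_mul_of_pos_left hr₂ (show (0:ℝ) < α₁ - α₂ by linarith)]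
  -- τ ρ₃₀ < ρ₃₀
  have hτlt : τ ρ₃₀ < ρ₃₀ := by
    by_contra h
    push_neg at h
    rcases h.lt_or_eq with h' | h'
    · have := anti ρ₃₀ (τ ρ₃₀) (le_of_lt hρ₃₀σ) h' hτI.2
      linarith [hτf]
    · exact hτne h'.symm
  -- τ ρ₃₀ ≤ σ
  have hτleσ : τ ρ₃₀ ≤ σ := by
    by_contra h
    push_neg at h
    have := anti (τ ρ₃₀) ρ₃₀ (le_of_lt h) hτlt (le_of_lt hρ₃₀1)
    linarith [hτf]
  -- ρh₃ < τ ρ₃₀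
  have hρlt : ρh₃ < τ ρ₃₀ := by
    by_contra h
    push_neg at h
    rcases h.lt_or_eq with h' | h'
    · have := mono (τ ρ₃₀) ρh₃ hτI.1 h' hρh₃mem.2
      rw [hτf, hρh₃f] at this
      linarith
    · rw [h', hρh₃f] at hτf
      linarith
  refine ⟨hγlt, hρlt, hτlt, by linarith, ?_, ?_⟩
  · rw [abs_of_pos (by linarith : (0:ℝ) < ρ₃₀ - ρh₃)]
    linarith
  · intro ε hε
    by_cases hc : σ < ε
    · exact ⟨1, one_pos, fun r' ρ₁ _ _ hmem _ => by
        have := hmem.1; linarith⟩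
    · push_neg at hc
      have hc0 : 0 ≤ σ - ε := by linarith
      have hcσ : σ - ε < σ := by linarith
      have hfc : f (σ - ε) < f σ := mono (σ - ε) σ hc0 hcσ le_rfl
      refine ⟨M - f (σ - ε), by rw [hM]; linarith, ?_⟩
      intro r' ρ₁ h1 h2 hmem hfρ
      by_contra h
      push_neg at h
      have hρc : ρ₁ ≤ σ - ε := by linarith
      have : f ρ₁ ≤ f (σ - ε) := by
        rcases hρc.lt_or_eq with h' | h'
        · exact le_of_lt (mono ρ₁ (σ - ε) hmem.1 h' (by linarith))
        · rw [h']
      rw [hfρ] at this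
      linarith
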